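/- Theorem 2 (leakage and seepage rates of the single-site leakage damping channel): for the single-site leakage damping channel Λ, tr(Π_l · Λ(Π_c / 2^n)) = ∑_{i=1}^n p_i, where p_i := 2^{−n} ∑_{k ∈ C, k' ∈ B_i} p_{k,k'}, and tr(Π_c · Λ(Π_l / (3^n − 2^n))) = (2^n / (3^n − 2^n)) ∑_{i=1}^n q_i, where q_i := 2^{−n} ∑_{k ∈ C, k' ∈ B_i} p_{k',k}. -/

import Mathlib

open Matrix Finset

noncomputable section

/-- Basis strings of an n-qutrit system. -/
abbrev TritStr (n : ℕ) := Fin n → Fin 3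

/-- k ∈ C: a computational string (no site equals 2). -/
def inC {n : ℕ} (k : TritStr n) : Prop := ∀ j, k j ≠ 2

/-- k ∈ B_i: site i equals 2 and every other site is 0 or 1. -/
def inB {n : ℕ} (i : Fin n) (k : TritStr n) : Prop :=
  k i = 2 ∧ ∀ j, j ≠ i → k j ≠ 2

/-- k ∈ B = ∪ᵢ B_i. -/
def inBall {n : ℕ} (k : TritStr n) : Prop := ∃ i, inB i k

/-- (k, k') ∈ W = (C×B) ∪ (B×C) ∪ ∪ᵢ(B_i×B_i) ∪ (C×C). -/
def inW {n : ℕ} (k k' : TritStr n) : Prop :=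
  (inC k ∧ inBall k') ∨ (inBall k ∧ inC k') ∨ (∃ i, inB i k ∧ inB i k') ∨
    (inC k ∧ inC k')

instance {n : ℕ} (k : TritStr n) : Decidable (inC k) := by
  unfold inC; infer_instance

instance {n : ℕ} (i : Fin n) (k : TritStr n) : Decidable (inB i k) := by
  unfold inB; infer_instance

instance {n : ℕ} (k : TritStr n) : Decidable (inBall k) := by
  unfold inBall; infer_instance

instance {n : ℕ} (k k' : TritStr n) : Decidable (inW k k') := by
  unfold inW; infer_instance

/-- ∑_{k' : (k,k') ∈ W} p_{k,k'}, the total damping probability out of `k`. -/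
def rowSum {n : ℕ} (p : TritStr n → TritStr n → ℝ) (k : TritStr n) : ℝ :=
  ∑ k' ∈ Finset.univ.filter (fun k' => inW k k'), p k k'

/-- The Kraus operator E₀ of the single-site leakage damping channel: diagonal
with (k,k) entry √(1 − ∑_{k'} p_{k,k'}) for k ∈ C ∪ B and 1 otherwise. -/
def E0 {n : ℕ} (p : TritStr n → TritStr n → ℝ) :
    Matrix (TritStr n) (TritStr n) ℂ :=
  Matrix.diagonal fun k =>
    if inC k ∨ inBall k then ((Real.sqrt (1 - rowSum p k) : ℝ) : ℂ) else 1

/-- The single-site leakage damping channel (Definition 1):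
Λ(ρ) = E₀ ρ E₀† + ∑_{(k,k') ∈ W} p_{k,k'} ⟨k|ρ|k⟩ |k'⟩⟨k'|. -/
def leakChannel {n : ℕ} (p : TritStr n → TritStr n → ℝ)
    (ρ : Matrix (TritStr n) (TritStr n) ℂ) : Matrix (TritStr n) (TritStr n) ℂ :=
  E0 p * ρ * (E0 p)ᴴ +
    ∑ kk' ∈ Finset.univ.filter (fun kk' : TritStr n × TritStr n => inW kk'.1 kk'.2),
      ((p kk'.1 kk'.2 : ℂ) * ρ kk'.1 kk'.1) • Matrix.single kk'.2 kk'.2 1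

/-- The computational projector Π_c on the n-qutrit space. -/
def compProj (n : ℕ) : Matrix (TritStr n) (TritStr n) ℂ :=
  Matrix.diagonal fun k => if inC k then 1 else 0

/-- The leakage projector Π_l = I − Π_c. -/
def leakProj (n : ℕ) : Matrix (TritStr n) (TritStr n) ℂ := 1 - compProj n

/-- The average leak probability p_i = 2^{−n} ∑_{k ∈ C, k' ∈ B_i} p_{k,k'}. -/
def leakRate {n : ℕ} (p : TritStr n → TritStr n → ℝ) (i : Fin n) : ℝ :=
  ((2 : ℝ) ^ n)⁻¹ *
    ∑ k ∈ Finset.univ.filter (fun k => inC k),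
      ∑ k' ∈ Finset.univ.filter (fun k' => inB i k'), p k k'

/-- The average seep probability q_i = 2^{−n} ∑_{k ∈ C, k' ∈ B_i} p_{k',k}. -/
def seepRate {n : ℕ} (p : TritStr n → TritStr n → ℝ) (i : Fin n) : ℝ :=
  ((2 : ℝ) ^ n)⁻¹ *
    ∑ k ∈ Finset.univ.filter (fun k => inC k),
      ∑ k' ∈ Finset.univ.filter (fun k' => inB i k'), p k' k


section Aux

variable {n : ℕ}

lemma inB_not_inC {i : Fin n} {k : TritStr n} (h : inB i k) : ¬ inC k :=
  fun hc => hc i h.1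

lemma inBall_not_inC {k : TritStr n} (h : inBall k) : ¬ inC k :=
  let ⟨_, hi⟩ := h; inB_not_inC hi

lemma inB_unique {i j : Fin n} {k : TritStr n} (hi : inB i k) (hj : inB j k) :
    i = j := by
  by_contra hij
  exact hj.2 i hij hi.1

lemma sum_inBall {M : Type*} [AddCommMonoid M] (g : TritStr n → M) :
    ∑ k : TritStr n, (if inBall k then g k else 0)
      = ∑ i : Fin n, ∑ k : TritStr n, if inB i k then g k else 0 := by
  rw [Finset.sum_comm]
  refine Finset.sum_congr rfl fun k _ => ?_
  by_cases h : inBall k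
  · obtain ⟨i, hi⟩ := h
    rw [if_pos ⟨i, hi⟩, Finset.sum_eq_single i]
    · rw [if_pos hi]
    · intro j _ hj
      exact if_neg fun hb => hj (inB_unique hb hi)
    · intro h; exact absurd (Finset.mem_univ i) h
  · rw [if_neg h]
    exact (Finset.sum_eq_zero fun j _ => if_neg fun hb => h ⟨j, hb⟩).symm

lemma keyW1 {k k' : TritStr n} :
    inW k k' ∧ inC k ∧ ¬ inC k' ↔ inC k ∧ inBall k' := by
  constructor
  · rintro ⟨hw, hk, hk'⟩
    refine ⟨hk, ?_⟩
    rcases hw with ⟨_, hb⟩ | ⟨hb, hc⟩ | ⟨i, hi, _⟩ | ⟨_, hc⟩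
    · exact hb
    · exact absurd hc hk'
    · exact absurd hk (inB_not_inC hi)
    · exact absurd hc hk'
  · rintro ⟨hk, hb⟩
    exact ⟨Or.inl ⟨hk, hb⟩, hk, inBall_not_inC hb⟩

lemma keyW2 {k k' : TritStr n} :
    inW k k' ∧ ¬ inC k ∧ inC k' ↔ inBall k ∧ inC k' := by
  constructor
  · rintro ⟨hw, hk, hk'⟩
    rcases hw with ⟨hc, _⟩ | ⟨hb, hc⟩ | ⟨i, _, hi'⟩ | ⟨hc, _⟩
    · exact absurd hc hk
    · exact ⟨hb, hc⟩
    · exact absurd hk' (inB_not_inC hi')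
    · exact absurd hc hk
  · rintro ⟨hb, hk'⟩
    exact ⟨Or.inr (Or.inl ⟨hb, hk'⟩), inBall_not_inC hb, hk'⟩

lemma zero_helper (a b c d e : ℂ) (h : e * b = 0) : e * (a * (c * b) * d) = 0 := by
  have h2 : e * (a * (c * b) * d) = (e * b) * (a * c * d) := by ring
  rw [h2, h, zero_mul]

lemma trace_diag_mul (d : TritStr n → ℂ) (B : Matrix (TritStr n) (TritStr n) ℂ) :
    Matrix.trace (Matrix.diagonal d * B) = ∑ k, d k * B k k := by
  simp [Matrix.trace, Matrix.diag, Matrix.diagonal_mul]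

lemma trace_diag_std (g : TritStr n → ℂ) (a : TritStr n) :
    Matrix.trace (Matrix.diagonal g * Matrix.single a a (1 : ℂ)) = g a := by
  rw [trace_diag_mul]
  simp [Matrix.single, Finset.sum_ite_eq]

/-- Master computation: trace of (diagonal projector) * leakChannel applied to a scaled
diagonal state whose diagonal is "orthogonal" to the projector. -/
lemma trace_diag_channel {n : ℕ} (p : TritStr n → TritStr n → ℝ) (c : ℂ)
    (f g : TritStr n → ℂ) (hfg : ∀ k, g k * f k = 0) :
    Matrix.trace (Matrix.diagonal g * leakChannel p (c • Matrix.diagonal f)) =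
      ∑ k : TritStr n, ∑ k' : TritStr n,
        if inW k k' then (p k k' : ℂ) * (c * f k) * g k' else 0 := by
  rw [leakChannel, mul_add, Matrix.trace_add]
  have h1 : Matrix.trace (Matrix.diagonal g *
      (E0 p * (c • Matrix.diagonal f) * (E0 p)ᴴ)) = 0 := by
    rw [E0, ← Matrix.diagonal_smul, Matrix.diagonal_mul_diagonal,
        Matrix.diagonal_conjTranspose, Matrix.diagonal_mul_diagonal,
        Matrix.diagonal_mul_diagonal, Matrix.trace_diagonal]
    refine Finset.sum_eq_zero fun k _ => ?_
    simp only [Pi.mul_apply, Pi.smul_apply, Pi.star_apply, smul_eq_mul]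
    exact zero_helper _ _ _ _ _ (hfg k)
  rw [h1, zero_add, Finset.mul_sum, Matrix.trace_sum]
  have h2 : ∀ kk' : TritStr n × TritStr n,
      Matrix.trace (Matrix.diagonal g *
        (((p kk'.1 kk'.2 : ℂ) * (c • Matrix.diagonal f) kk'.1 kk'.1) •
          Matrix.single kk'.2 kk'.2 1)) =
      (p kk'.1 kk'.2 : ℂ) * (c * f kk'.1) * g kk'.2 := by
    intro kk'
    rw [Matrix.mul_smul, Matrix.trace_smul, smul_eq_mul, trace_diag_std]
    simp [Matrix.diagonal_apply_eq, mul_assoc]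
  rw [Finset.sum_congr rfl fun kk' _ => h2 kk', Finset.sum_filter,
      ← Finset.univ_product_univ, Finset.sum_product]

end Aux

/-- Theorem 2 (leakage and seepage rates of the single-site leakage damping
channel): tr(Π_l Λ(Π_c / 2^n)) = ∑ᵢ pᵢ and
tr(Π_c Λ(Π_l / (3^n − 2^n))) = (2^n/(3^n − 2^n)) ∑ᵢ qᵢ. -/
theorem single_site_leakage_rates (n : ℕ) (hn : 1 ≤ n)
    (p : TritStr n → TritStr n → ℝ)
    (hpos : ∀ k k', inW k k' → 0 ≤ p k k')
    (hsum : ∀ k : TritStr n, rowSum p k ≤ 1) :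
    Matrix.trace (leakProj n * leakChannel p (((2 : ℂ) ^ n)⁻¹ • compProj n)) =
        ((∑ i, leakRate p i : ℝ) : ℂ) ∧
      Matrix.trace (compProj n *
          leakChannel p (((3 : ℂ) ^ n - 2 ^ n)⁻¹ • leakProj n)) =
        (((2 : ℝ) ^ n / ((3 : ℝ) ^ n - 2 ^ n) * ∑ i, seepRate p i : ℝ) : ℂ) := by
  have h2n : ((2 : ℂ) ^ n) ≠ 0 := pow_ne_zero _ two_ne_zero
  constructor
  · -- leakage part
    have hfg : ∀ k : TritStr n,
        (1 - (if inC k then (1 : ℂ) else 0)) * (if inC k then (1 : ℂ) else 0) = 0 := by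
      intro k; by_cases h : inC k <;> simp [h]
    have hl : leakProj n
        = Matrix.diagonal (fun k : TritStr n => 1 - (if inC k then (1 : ℂ) else 0)) := by
      rw [leakProj, compProj, ← Matrix.diagonal_one, Matrix.diagonal_sub]
    rw [hl, compProj, trace_diag_channel p _ _ _ hfg]
    have key : ∀ k k' : TritStr n,
        (if inW k k' then (p k k' : ℂ) * ((((2 : ℂ) ^ n)⁻¹) * (if inC k then 1 else 0)) *
            (1 - if inC k' then 1 else 0) else 0)
        = (if inBall k' then (if inC k then ((2 : ℂ) ^ n)⁻¹ * (p k k' : ℂ) else 0) else 0) := by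
      intro k k'
      by_cases hc : inC k
      · by_cases hb : inBall k'
        · rw [if_pos (keyW1.mpr ⟨hc, hb⟩).1, if_pos hb, if_pos hc, if_pos hc,
            if_neg (inBall_not_inC hb)]
          ring
        · rw [if_neg hb]
          by_cases hw : inW k k'
          · have hc' : inC k' := by
              by_contra hc'
              exact hb (keyW1.mp ⟨hw, hc, hc'⟩).2
            simp [hw, hc']
          · rw [if_neg hw]
      · simp [hc]
    rw [Finset.sum_congr rfl fun k _ => Finset.sum_congr rfl fun k' _ => key k k',
        Finset.sum_congr rfl fun k _ => sum_inBall _, Finset.sum_comm]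
    simp only [leakRate]
    push_cast
    refine Finset.sum_congr rfl fun i _ => ?_
    rw [Finset.sum_filter, Finset.mul_sum]
    refine Finset.sum_congr rfl fun k _ => ?_
    by_cases hc : inC k
    · simp [hc, Finset.sum_filter, Finset.mul_sum, mul_ite]
    · simp [hc]
  · -- seepage part
    have hfg : ∀ k : TritStr n,
        (if inC k then (1 : ℂ) else 0) * (1 - (if inC k then (1 : ℂ) else 0)) = 0 := by
      intro k; by_cases h : inC k <;> simp [h]
    have hl : leakProj n
        = Matrix.diagonal (fun k : TritStr n => 1 - (if inC k then (1 : ℂ) else 0)) := by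
      rw [leakProj, compProj, ← Matrix.diagonal_one, Matrix.diagonal_sub]
    rw [hl, compProj, trace_diag_channel p _ _ _ hfg]
    have key : ∀ k k' : TritStr n,
        (if inW k k' then (p k k' : ℂ) * ((((3 : ℂ) ^ n - 2 ^ n)⁻¹) *
            (1 - if inC k then 1 else 0)) * (if inC k' then 1 else 0) else 0)
        = (if inBall k then
            (if inC k' then ((3 : ℂ) ^ n - 2 ^ n)⁻¹ * (p k k' : ℂ) else 0) else 0) := by
      intro k k'
      by_cases hc' : inC k'
      · by_cases hb : inBall k
        · rw [if_pos (keyW2.mpr ⟨hb, hc'⟩).1, if_pos hb, if_pos hc', if_pos hc',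
            if_neg (inBall_not_inC hb)]
          ring
        · rw [if_neg hb]
          by_cases hw : inW k k'
          · have hc : inC k := by
              by_contra hc
              exact hb (keyW2.mp ⟨hw, hc, hc'⟩).1
            simp [hw, hc]
          · rw [if_neg hw]
      · simp [hc']
    have pull : ∀ (k : TritStr n),
        (∑ k' : TritStr n, if inBall k then
            (if inC k' then ((3 : ℂ) ^ n - 2 ^ n)⁻¹ * (p k k' : ℂ) else 0) else 0)
        = (if inBall k then
            (∑ k' : TritStr n, if inC k' then ((3 : ℂ) ^ n - 2 ^ n)⁻¹ * (p k k' : ℂ) else 0)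
          else 0) := by
      intro k
      by_cases hb : inBall k <;> simp [hb]
    rw [Finset.sum_congr rfl fun k _ => Finset.sum_congr rfl fun k' _ => key k k',
        Finset.sum_congr rfl fun k _ => pull k, sum_inBall]
    simp only [seepRate]
    push_cast
    rw [Finset.mul_sum]
    refine Finset.sum_congr rfl fun i _ => ?_
    rw [← mul_assoc,
        show (2 : ℂ) ^ n / ((3 : ℂ) ^ n - 2 ^ n) * ((2 : ℂ) ^ n)⁻¹
            = ((3 : ℂ) ^ n - 2 ^ n)⁻¹ by
          rw [div_eq_mul_inv, mul_right_comm, mul_inv_cancel₀ h2n, one_mul],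
        Finset.sum_comm]
    rw [Finset.sum_filter, Finset.mul_sum]
    refine Finset.sum_congr rfl fun k _ => ?_
    by_cases hb : inB i k
    · simp [hb, Finset.sum_filter, Finset.mul_sum, mul_ite]
    · simp [hb]
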